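/- Let H be a Hilbert space and A, B closed subspaces. For any a ∈ A and b ∈ B, the inner product ⟨P_{A∩B}^⊥ a, P_{A∩B}^⊥ b⟩ equals the negative of the sum over k ≥ 0 of ⟨(P_A^⊥ P_B^⊥)^{k+1} a, b⟩. -/

import Mathlib

open scoped InnerProductSpace

/-- The orthogonal projection of `H` onto the closed subspace `K`, as a map `H →L[ℂ] H`. -/
noncomputable def projCLM {H : Type*} [NormedAddCommGroup H] [InnerProductSpace ℂ H]
    (K : Submodule ℂ H) [K.HasOrthogonalProjection] : H →L[ℂ] H :=
  K.subtypeL.comp K.orthogonalProjectionOnto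

open Filter Topology

section API
variable {H : Type*} [NormedAddCommGroup H] [InnerProductSpace ℂ H]
variable (K : Submodule ℂ H) [Submodule.HasOrthogonalProjection K]

lemma projCLM_mem (x : H) : projCLM K x ∈ K := (K.orthogonalProjectionOnto x).2

lemma projCLM_eq_self {x : H} (hx : x ∈ K) : projCLM K x = x :=
  Submodule.starProjection_eq_self_iff.mpr hx

lemma projCLM_inner_left_right (x y : H) : ⟪projCLM K x, y⟫_ℂ = ⟪x, projCLM K y⟫_ℂ :=
  Submodule.inner_starProjection_left_eq_right (K := K) x y

lemma sub_projCLM_inner (x : H) {y : H} (hy : y ∈ K) : ⟪x - projCLM K x, y⟫_ℂ = 0 :=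
  Submodule.starProjection_inner_eq_zero x y hy

lemma projCLM_norm_le (x : H) : ‖projCLM K x‖ ≤ ‖x‖ := by
  simpa [projCLM] using K.orthogonalProjectionOnto.le_of_opNorm_le (Submodule.orthogonalProjectionOnto_norm_le (K := K)) x

lemma projCLM_pythagoras (x : H) :
    ‖x‖ ^ 2 = ‖projCLM K x‖ ^ 2 + ‖x - projCLM K x‖ ^ 2 := by
  have h := sub_projCLM_inner K x (projCLM_mem K x)
  have := norm_add_sq (𝕜 := ℂ) (projCLM K x) (x - projCLM K x)
  rw [add_sub_cancel] at this
  rw [this, ← inner_conj_symm, h]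
  simp

lemma projCLM_inner_self (x : H) : ⟪projCLM K x, x⟫_ℂ = (‖projCLM K x‖ ^ 2 : ℝ) := by
  have h0 : ⟪projCLM K x, x - projCLM K x⟫_ℂ = 0 := by
    rw [← inner_conj_symm, sub_projCLM_inner K x (projCLM_mem K x)]; simp
  have : ⟪projCLM K x, x⟫_ℂ = ⟪projCLM K x, projCLM K x⟫_ℂ + ⟪projCLM K x, x - projCLM K x⟫_ℂ := by
    rw [inner_sub_right]; ring
  rw [this, h0, add_zero, inner_self_eq_norm_sq_to_K]
  norm_num

lemma projCLM_idem (x : H) : projCLM K (projCLM K x) = projCLM K x :=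
  projCLM_eq_self K (projCLM_mem K x)

end API

section Seq
variable {H : Type*} [NormedAddCommGroup H] [InnerProductSpace ℂ H]
variable (A B : Submodule ℂ H) [Submodule.HasOrthogonalProjection A] [Submodule.HasOrthogonalProjection B]

/-- the alternating projection sequence starting at `a`, first projecting to `B`. -/
noncomputable def altSeq (a : H) : ℕ → H
  | 0 => a
  | n + 1 => if Even n then projCLM B (altSeq a n) else projCLM A (altSeq a n)

lemma altSeq_succ_even (a : H) {n : ℕ} (h : Even n) :
    altSeq A B a (n + 1) = projCLM B (altSeq A B a n) := by simp [altSeq, h]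

lemma altSeq_succ_odd (a : H) {n : ℕ} (h : ¬ Even n) :
    altSeq A B a (n + 1) = projCLM A (altSeq A B a n) := by simp [altSeq, h]

lemma altSeq_mem {a : H} (ha : a ∈ A) (n : ℕ) :
    altSeq A B a n ∈ (if Even n then A else B) := by
  induction n with
  | zero => simpa [altSeq.eq_1] using ha
  | succ n ih =>
    by_cases h : Even n
    · rw [altSeq_succ_even A B a h]
      simp [Nat.even_add_one, h, projCLM_mem]
    · rw [altSeq_succ_odd A B a h]
      simp [Nat.even_add_one, h, projCLM_mem]

lemma altSeq_mem_even {a : H} (ha : a ∈ A) {n : ℕ} (h : Even n) : altSeq A B a n ∈ A := by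
  have := altSeq_mem A B ha n; rwa [if_pos h] at this

lemma altSeq_mem_odd {a : H} (ha : a ∈ A) {n : ℕ} (h : ¬ Even n) : altSeq A B a n ∈ B := by
  have := altSeq_mem A B ha n; rwa [if_neg h] at this

lemma altSeq_pythagoras (a : H) (n : ℕ) :
    ‖altSeq A B a n‖ ^ 2
      = ‖altSeq A B a (n + 1)‖ ^ 2 + ‖altSeq A B a n - altSeq A B a (n + 1)‖ ^ 2 := by
  by_cases h : Even n
  · rw [altSeq_succ_even A B a h]; exact projCLM_pythagoras B _
  · rw [altSeq_succ_odd A B a h]; exact projCLM_pythagoras A _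

lemma altSeq_diff_sq_summable (a : H) :
    Summable (fun n => ‖altSeq A B a n - altSeq A B a (n + 1)‖ ^ 2) := by
  apply summable_of_sum_range_le (c := ‖a‖ ^ 2)
  · intro n; positivity
  · intro n
    have : ∀ N, ∑ i ∈ Finset.range N, ‖altSeq A B a i - altSeq A B a (i + 1)‖ ^ 2
        = ‖a‖ ^ 2 - ‖altSeq A B a N‖ ^ 2 := by
      intro N
      have := Finset.sum_range_sub' (fun i => ‖altSeq A B a i‖ ^ 2) N
      have h2 : ∀ i, ‖altSeq A B a i‖ ^ 2 - ‖altSeq A B a (i+1)‖ ^ 2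
          = ‖altSeq A B a i - altSeq A B a (i + 1)‖ ^ 2 := by
        intro i; have := altSeq_pythagoras A B a i; linarith
      simpa [h2, altSeq.eq_1] using this
    rw [this n]
    have : (0:ℝ) ≤ ‖altSeq A B a n‖ ^ 2 := by positivity
    linarith

/-- the basic shift identity. -/
lemma altSeq_shift (a b : H) {n m : ℕ} (h : ¬ Even (n + m)) :
    ⟪altSeq A B a (n + 1), altSeq B A b m⟫_ℂ
      = ⟪altSeq A B a n, altSeq B A b (m + 1)⟫_ℂ := by
  by_cases hn : Even n
  · have hm : ¬ Even m := fun hm => h (hn.add hm)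
    rw [altSeq_succ_even A B a hn, altSeq_succ_odd B A b hm]
    exact projCLM_inner_left_right B _ _
  · have hm : Even m := by
      simp [Nat.even_iff] at hn h ⊢; omega
    rw [altSeq_succ_odd A B a hn, altSeq_succ_even B A b hm]
    exact projCLM_inner_left_right A _ _

lemma altSeq_shift_iter (a b : H) (j : ℕ) : ∀ n m : ℕ, Even (n + m + j) →
    ⟪altSeq A B a (n + j), altSeq B A b m⟫_ℂ = ⟪altSeq A B a n, altSeq B A b (m + j)⟫_ℂ := by
  induction j with
  | zero => intro n m _; rfl
  | succ j ih =>
    intro n m h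
    have h1 : ¬ Even ((n + j) + m) := by
      simp [Nat.even_iff] at h ⊢; omega
    have h2 : Even (n + (m + 1) + j) := by
      simp [Nat.even_iff] at h ⊢; omega
    have e1 : n + (j + 1) = n + j + 1 := by omega
    have e2 : m + 1 + j = m + (j + 1) := by omega
    rw [e1, altSeq_shift A B a b h1, ih n (m + 1) h2, e2]

end Seq

section Conv
variable {H : Type*} [NormedAddCommGroup H] [InnerProductSpace ℂ H]
variable (A B : Submodule ℂ H) [Submodule.HasOrthogonalProjection A] [Submodule.HasOrthogonalProjection B]

/-- one full round of alternating projection -/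
noncomputable def altS (u : H) : H := projCLM B (projCLM A (projCLM B u))

lemma altS_selfadj (u v : H) : ⟪altS A B u, v⟫_ℂ = ⟪u, altS A B v⟫_ℂ := by
  unfold altS
  rw [projCLM_inner_left_right B, projCLM_inner_left_right A, projCLM_inner_left_right B]

lemma altS_iter_inner (x : H) : ∀ m n : ℕ,
    ⟪(altS A B)^[n] x, (altS A B)^[m] x⟫_ℂ = ⟪(altS A B)^[n + m] x, x⟫_ℂ := by
  intro m
  induction m with
  | zero => intro n; rfl
  | succ m ih =>
    intro n
    have h1 : (altS A B)^[m+1] x = altS A B ((altS A B)^[m] x) :=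
      Function.iterate_succ_apply' _ _ _
    have h2 : (altS A B)^[n+1] x = altS A B ((altS A B)^[n] x) :=
      Function.iterate_succ_apply' _ _ _
    rw [h1, ← altS_selfadj, ← h2, ih (n+1)]
    congr 2
    omega

lemma inner_altS_self (u : H) :
    ⟪altS A B u, u⟫_ℂ = ((‖projCLM A (projCLM B u)‖ ^ 2 : ℝ) : ℂ) := by
  unfold altS
  rw [projCLM_inner_left_right B, projCLM_inner_self A]

noncomputable def eSeq (x : H) (n : ℕ) : ℝ :=
  if Even n then ‖(altS A B)^[n / 2] x‖ ^ 2
  else ‖projCLM A (projCLM B ((altS A B)^[n / 2] x))‖ ^ 2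

lemma eSeq_spec (x : H) (n : ℕ) :
    ⟪(altS A B)^[n] x, x⟫_ℂ = ((eSeq A B x n : ℝ) : ℂ) := by
  rcases Nat.even_or_odd n with he | ho
  · obtain ⟨j, hj⟩ := id he
    have hd : n / 2 = j := by omega
    rw [eSeq, if_pos he, hd, hj, ← altS_iter_inner, inner_self_eq_norm_sq_to_K]
    norm_cast
  · obtain ⟨j, hj⟩ := id ho
    have hd : n / 2 = j := by omega
    have h1 : n = (j + 1) + j := by omega
    have h2 : (altS A B)^[j+1] x = altS A B ((altS A B)^[j] x) :=
      Function.iterate_succ_apply' _ _ _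
    rw [eSeq, if_neg (show ¬ Even n by simp [Nat.even_iff]; omega), hd, h1, ← altS_iter_inner, h2,
      inner_altS_self]

lemma eSeq_antitone (x : H) : Antitone (eSeq A B x) := by
  apply antitone_nat_of_succ_le
  intro n
  rcases Nat.even_or_odd n with he | ho
  · obtain ⟨j, hj⟩ := id he
    have h1 : n / 2 = j := by omega
    have h2 : (n + 1) / 2 = j := by omega
    rw [eSeq, eSeq, if_pos he, if_neg (show ¬ Even (n+1) by simp [Nat.even_iff]; omega), h1, h2]
    have l1 : ‖projCLM A (projCLM B ((altS A B)^[j] x))‖ ≤ ‖(altS A B)^[j] x‖ :=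
      le_trans (projCLM_norm_le A _) (projCLM_norm_le B _)
    exact pow_le_pow_left₀ (norm_nonneg _) l1 2
  · obtain ⟨j, hj⟩ := id ho
    have h1 : n / 2 = j := by omega
    have h2 : (n + 1) / 2 = j + 1 := by omega
    have h3 : (altS A B)^[j+1] x = altS A B ((altS A B)^[j] x) :=
      Function.iterate_succ_apply' _ _ _
    rw [eSeq, eSeq, if_neg (show ¬ Even n by simp [Nat.even_iff]; omega),
      if_pos (show Even (n+1) by simp [Nat.even_iff]; omega), h1, h2, h3]
    have l1 : ‖altS A B ((altS A B)^[j] x)‖ ≤ ‖projCLM A (projCLM B ((altS A B)^[j] x))‖ := by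
      unfold altS; exact projCLM_norm_le B _
    exact pow_le_pow_left₀ (norm_nonneg _) l1 2

lemma eSeq_nonneg (x : H) (n : ℕ) : 0 ≤ eSeq A B x n := by
  rw [eSeq]; split <;> positivity

lemma eSeq_norm_sq (x : H) (n : ℕ) : ‖(altS A B)^[n] x‖ ^ 2 = eSeq A B x (n + n) := by
  have h1 := altS_iter_inner A B x n n
  rw [eSeq_spec, inner_self_eq_norm_sq_to_K] at h1
  have := congrArg Complex.re h1
  simpa [← Complex.ofReal_pow] using this

lemma eSeq_re_inner (x : H) (n m : ℕ) :
    RCLike.re ⟪(altS A B)^[n] x, (altS A B)^[m] x⟫_ℂ = eSeq A B x (n + m) := by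
  rw [altS_iter_inner, eSeq_spec]; simp

end Conv

section Conv2
open Filter Topology
variable {H : Type*} [NormedAddCommGroup H] [InnerProductSpace ℂ H]
variable (A B : Submodule ℂ H) [Submodule.HasOrthogonalProjection A] [Submodule.HasOrthogonalProjection B]

theorem altS_tendsto [CompleteSpace H] [Submodule.HasOrthogonalProjection (A ⊓ B)] (x : H) :
    Tendsto (fun n => (altS A B)^[n] x) atTop (𝓝 (projCLM (A ⊓ B) x)) := by
  set u : ℕ → H := fun n => (altS A B)^[n] x with hu
  set E := eSeq A B x with hE
  have hanti : Antitone E := eSeq_antitone A B x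
  have hbdd : BddBelow (Set.range E) := ⟨0, by rintro r ⟨n, rfl⟩; exact eSeq_nonneg A B x n⟩
  set d := ⨅ n, E n with hd
  have htend : Tendsto E atTop (𝓝 d) := tendsto_atTop_ciInf hanti hbdd
  have hdle : ∀ m, d ≤ E m := fun m => ciInf_le hbdd m
  have key : ∀ N n, N ≤ n → ‖u n - u N‖ ^ 2 ≤ E (N + N) - d := by
    intro N n hNn
    have hns := norm_sub_sq (𝕜 := ℂ) (u n) (u N)
    rw [show ‖u n‖ ^ 2 = E (n + n) from eSeq_norm_sq A B x n,
      show ‖u N‖ ^ 2 = E (N + N) from eSeq_norm_sq A B x N,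
      show RCLike.re ⟪u n, u N⟫_ℂ = E (n + N) from eSeq_re_inner A B x n N] at hns
    have h1 : E (n + n) ≤ E (n + N) := hanti (by omega)
    have h2 := hdle (n + N)
    rw [hns]
    linarith
  have hcauchy : CauchySeq u := by
    rw [Metric.cauchySeq_iff']
    intro ε hε
    obtain ⟨M, hM⟩ := (Metric.tendsto_atTop.mp htend) (ε ^ 2) (by positivity)
    refine ⟨M, fun n hn => ?_⟩
    have hEM : E (M + M) - d < ε ^ 2 := by
      have := hM (M + M) (by omega)
      rw [Real.dist_eq] at this
      exact lt_of_abs_lt this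
    rw [dist_eq_norm]
    exact lt_of_pow_lt_pow_left₀ 2 (le_of_lt hε) (lt_of_le_of_lt (key M n hn) hEM)
  obtain ⟨z, hz⟩ := cauchySeq_tendsto_of_complete hcauchy
  have h2 : ∀ n, u (n + 1) = altS A B (u n) := fun n => Function.iterate_succ_apply' _ _ _
  have hSz : altS A B z = z := by
    have h1 : Tendsto (fun n => u (n + 1)) atTop (𝓝 z) := hz.comp (tendsto_add_atTop_nat 1)
    have hcont : Continuous (altS A B) := by
      show Continuous fun v => projCLM B (projCLM A (projCLM B v))
      exact ((projCLM B).continuous.comp ((projCLM A).continuous.comp (projCLM B).continuous))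
    have h3 : Tendsto (fun n => altS A B (u n)) atTop (𝓝 (altS A B z)) :=
      (hcont.tendsto z).comp hz
    exact tendsto_nhds_unique h3 (h1.congr h2)
  have hzB : z ∈ B := by rw [← hSz]; exact projCLM_mem B _
  have hPBz : projCLM B z = z := projCLM_eq_self B hzB
  have hzform : z = projCLM B (projCLM A z) := by
    conv_lhs => rw [← hSz]
    unfold altS
    rw [hPBz]
  have hnorm : ‖projCLM A z‖ = ‖z‖ := by
    refine le_antisymm (projCLM_norm_le A z) ?_
    calc ‖z‖ = ‖projCLM B (projCLM A z)‖ := by rw [← hzform]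
      _ ≤ ‖projCLM A z‖ := projCLM_norm_le B _
  have hzA : z ∈ A := by
    have hp := projCLM_pythagoras A z
    rw [hnorm] at hp
    have h0 : ‖z - projCLM A z‖ ^ 2 = 0 := by linarith
    have : z - projCLM A z = 0 := by
      simpa using (pow_eq_zero_iff (n := 2) (by norm_num)).mp h0
    have hze : z = projCLM A z := by rwa [sub_eq_zero] at this
    rw [hze]; exact projCLM_mem A z
  have hzmem : z ∈ A ⊓ B := Submodule.mem_inf.mpr ⟨hzA, hzB⟩
  have horth : ∀ w ∈ A ⊓ B, ⟪x - z, w⟫_ℂ = 0 := by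
    intro w hw
    obtain ⟨hwA, hwB⟩ := Submodule.mem_inf.mp hw
    have hfix : altS A B w = w := by
      unfold altS
      rw [projCLM_eq_self B hwB, projCLM_eq_self A hwA, projCLM_eq_self B hwB]
    have hconst : ∀ n, ⟪u n, w⟫_ℂ = ⟪x, w⟫_ℂ := by
      intro n
      induction n with
      | zero => rfl
      | succ n ih => rw [h2 n, altS_selfadj, hfix, ih]
    have h4 : Tendsto (fun n => ⟪u n, w⟫_ℂ) atTop (𝓝 ⟪z, w⟫_ℂ) := hz.inner tendsto_const_nhds
    have h5 : ⟪z, w⟫_ℂ = ⟪x, w⟫_ℂ := tendsto_nhds_unique (h4.congr hconst) tendsto_const_nhds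
    rw [inner_sub_left, h5, sub_self]
  have hfinal : projCLM (A ⊓ B) x = z :=
    Submodule.eq_starProjection_of_mem_of_inner_eq_zero hzmem horth
  rw [hfinal]
  exact hz

end Conv2

theorem alternating_projection_inner_cross_rep {H : Type*} [NormedAddCommGroup H]
    [InnerProductSpace ℂ H] [CompleteSpace H] (A B : Submodule ℂ H)
    (hA : IsClosed (A : Set H)) (hB : IsClosed (B : Set H))
    [CompleteSpace A] [CompleteSpace B] [CompleteSpace ↥(A ⊓ B)]
    (a b : H) (ha : a ∈ A) (hb : b ∈ B) :
    ⟪(1 - projCLM (A ⊓ B)) a, (1 - projCLM (A ⊓ B)) b⟫_ℂ =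
      - ∑' k : ℕ,
          ⟪(((1 - projCLM A) * (1 - projCLM B)) ^ (k + 1)) a, b⟫_ℂ := by
  set M : H →L[ℂ] H := (1 - projCLM A) * (1 - projCLM B) with hMdef
  set aseq : ℕ → H := altSeq A B a with haseq
  set bseq : ℕ → H := altSeq B A b with hbseq
  set t : ℕ → ℂ := fun k => ⟪(M ^ (k + 1)) a, b⟫_ℂ with htdef
  set c : ℕ → ℂ := fun k => ⟪aseq (2 * k), b⟫_ℂ with hcdef
  have hM : ∀ v : H, M v = (v - projCLM B v) - projCLM A (v - projCLM B v) := by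
    intro v
    simp [hMdef, ContinuousLinearMap.mul_apply, ContinuousLinearMap.sub_apply,
      ContinuousLinearMap.one_apply]
  -- the basic power formula
  have hMpow : ∀ k, (M ^ (k + 1)) a = aseq (2 * k + 2) - aseq (2 * k + 1) := by
    intro k
    induction k with
    | zero =>
      rw [pow_one, hM a]
      have e1 : aseq 1 = projCLM B a := altSeq_succ_even A B a (Even.zero)
      have e2 : aseq 2 = projCLM A (aseq 1) := altSeq_succ_odd A B a (by decide)
      rw [show (2 * 0 + 2 : ℕ) = 2 by norm_num, show (2 * 0 + 1 : ℕ) = 1 by norm_num,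
        e1, e2, e1, map_sub, projCLM_eq_self A ha]
      abel
    | succ k ih =>
      have hstep : (M ^ (k + 1 + 1)) a = M ((M ^ (k + 1)) a) := by
        rw [pow_succ']; rfl
      rw [hstep, ih, map_sub, hM, hM]
      have hY : projCLM B (aseq (2 * k + 1)) = aseq (2 * k + 1) :=
        projCLM_eq_self B (altSeq_mem_odd A B ha (by simp [Nat.even_iff] <;> omega))
      have hX1 : projCLM B (aseq (2 * k + 2)) = aseq (2 * k + 3) :=
        (altSeq_succ_even A B a (by simp [Nat.even_iff] <;> omega : Even (2 * k + 2))).symm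
      have hX2 : projCLM A (aseq (2 * k + 2)) = aseq (2 * k + 2) :=
        projCLM_eq_self A (altSeq_mem_even A B ha (by simp [Nat.even_iff] <;> omega))
      have hX3 : projCLM A (aseq (2 * k + 3)) = aseq (2 * k + 4) :=
        (altSeq_succ_odd A B a (by simp [Nat.even_iff] <;> omega : ¬ Even (2 * k + 3))).symm
      have e4 : 2 * (k + 1) + 2 = 2 * k + 4 := by omega
      have e3 : 2 * (k + 1) + 1 = 2 * k + 3 := by omega
      rw [hY]
      simp only [sub_self, map_zero, sub_zero]
      rw [hX1, map_sub, hX2, hX3, e4, e3]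
      abel
  -- ⟪aseq (2k+1), b⟫ = ⟪aseq (2k), b⟫
  have hodd_even : ∀ k, ⟪aseq (2 * k + 1), b⟫_ℂ = ⟪aseq (2 * k), b⟫_ℂ := by
    intro k
    have e1 : aseq (2 * k + 1) = projCLM B (aseq (2 * k)) :=
      altSeq_succ_even A B a (by simp [Nat.even_iff] : Even (2 * k))
    rw [e1, projCLM_inner_left_right B, projCLM_eq_self B hb]
  -- telescoping description of t
  have ht_c : ∀ k, t k = c (k + 1) - c k := by
    intro k
    rw [htdef]
    simp only
    rw [hMpow k, inner_sub_left, hodd_even k]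
    have e : 2 * (k + 1) = 2 * k + 2 := by omega
    rw [hcdef]
    simp only
    rw [e]
  -- diagonal description
  have hdiag : ∀ k, ⟪aseq (2 * k), b⟫_ℂ = ⟪aseq k, bseq k⟫_ℂ := by
    intro k
    have := altSeq_shift_iter A B a b k k 0 (by simp [Nat.even_iff] <;> omega)
    rw [show k + k = 2 * k by omega] at this
    rw [show (0 : ℕ) + k = k by omega] at this
    exact this
  have ht_diag : ∀ k, t k = ⟪aseq (k + 1), bseq (k + 1)⟫_ℂ - ⟪aseq k, bseq k⟫_ℂ := by
    intro k
    rw [ht_c k, hcdef]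
    simp only
    rw [show 2 * (k + 1) = 2 * (k + 1) from rfl, hdiag (k + 1), hdiag k]
  -- inner product form of the increments
  have ht_gh : ∀ k, t k =
      -⟪aseq (k + 1) - aseq (k + 2), bseq k - bseq (k + 1)⟫_ℂ := by
    intro k
    have claim1 : ⟪aseq k - aseq (k + 1), bseq k⟫_ℂ = 0 := by
      by_cases hk : Even k
      · rw [haseq, altSeq_succ_even A B a hk]
        exact sub_projCLM_inner B _ (altSeq_mem_even B A hb hk)
      · rw [haseq, altSeq_succ_odd A B a hk]
        exact sub_projCLM_inner A _ (altSeq_mem_odd B A hb hk)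
    have claim2 : ⟪aseq (k + 2), bseq k - bseq (k + 1)⟫_ℂ = 0 := by
      by_cases hk : Even k
      · have h1 : bseq (k + 1) = projCLM A (bseq k) := altSeq_succ_even B A b hk
        have h2 : aseq (k + 2) = projCLM A (aseq (k + 1)) :=
          altSeq_succ_odd A B a (by simp [Nat.even_add_one, hk])
        rw [h1, h2, projCLM_inner_left_right A, map_sub, projCLM_idem, sub_self, inner_zero_right]
      · have h1 : bseq (k + 1) = projCLM B (bseq k) := altSeq_succ_odd B A b hk
        have h2 : aseq (k + 2) = projCLM B (aseq (k + 1)) :=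
          altSeq_succ_even A B a (by simp [Nat.even_add_one, hk])
        rw [h1, h2, projCLM_inner_left_right B, map_sub, projCLM_idem, sub_self, inner_zero_right]
    rw [ht_diag k]
    have expand : ⟪aseq (k + 1), bseq (k + 1)⟫_ℂ - ⟪aseq k, bseq k⟫_ℂ =
        -⟪aseq (k + 1) - aseq (k + 2), bseq k - bseq (k + 1)⟫_ℂ
          - ⟪aseq k - aseq (k + 1), bseq k⟫_ℂ - ⟪aseq (k + 2), bseq k - bseq (k+1)⟫_ℂ := by
      simp only [inner_sub_left, inner_sub_right]
      ring
    rw [expand, claim1, claim2, sub_zero, sub_zero]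
  -- summability
  have hsummable : Summable t := by
    have hga : Summable (fun n => ‖aseq n - aseq (n + 1)‖ ^ 2) := altSeq_diff_sq_summable A B a
    have hga' : Summable (fun n => ‖aseq (n + 1) - aseq (n + 2)‖ ^ 2) :=
      (summable_nat_add_iff 1).mpr hga
    have hgb : Summable (fun n => ‖bseq n - bseq (n + 1)‖ ^ 2) := altSeq_diff_sq_summable B A b
    have hbound : Summable (fun n =>
        (‖aseq (n + 1) - aseq (n + 2)‖ ^ 2 + ‖bseq n - bseq (n + 1)‖ ^ 2) / 2) :=
      (hga'.add hgb).div_const 2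
    apply Summable.of_norm_bounded hbound
    intro k
    rw [ht_gh k, norm_neg]
    calc ‖⟪aseq (k + 1) - aseq (k + 2), bseq k - bseq (k + 1)⟫_ℂ‖
        ≤ ‖aseq (k + 1) - aseq (k + 2)‖ * ‖bseq k - bseq (k + 1)‖ := norm_inner_le_norm _ _
      _ ≤ (‖aseq (k + 1) - aseq (k + 2)‖ ^ 2 + ‖bseq k - bseq (k + 1)‖ ^ 2) / 2 := by
          nlinarith [sq_nonneg (‖aseq (k + 1) - aseq (k + 2)‖ - ‖bseq k - bseq (k + 1)‖)]
  -- limit of c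
  have haseq_iter : ∀ k, aseq (2 * k + 1) = (altS A B)^[k] (projCLM B a) := by
    intro k
    induction k with
    | zero => simpa [altSeq.eq_1] using (altSeq_succ_even A B a Even.zero)
    | succ k ih =>
      have h1 : aseq (2 * k + 3) = projCLM B (aseq (2 * k + 2)) :=
        altSeq_succ_even A B a (by simp [Nat.even_iff] <;> omega)
      have h2 : aseq (2 * k + 2) = projCLM A (aseq (2 * k + 1)) :=
        altSeq_succ_odd A B a (by simp [Nat.even_iff] <;> omega)
      have h3 : projCLM B (aseq (2 * k + 1)) = aseq (2 * k + 1) :=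
        projCLM_eq_self B (altSeq_mem_odd A B ha (by simp [Nat.even_iff] <;> omega))
      have : aseq (2 * (k + 1) + 1) = altS A B (aseq (2 * k + 1)) := by
        rw [show 2 * (k + 1) + 1 = 2 * k + 3 by omega, h1, h2]
        unfold altS
        rw [h3]
      rw [this, ih]
      exact (Function.iterate_succ_apply' (altS A B) k (projCLM B a)).symm
  have hz0 : projCLM (A ⊓ B) (projCLM B a) = projCLM (A ⊓ B) a := by
    apply Submodule.eq_starProjection_of_mem_of_inner_eq_zero (projCLM_mem (A ⊓ B) a)
    intro w hw
    have hwB : w ∈ B := (Submodule.mem_inf.mp hw).2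
    have h1 : ⟪a - projCLM B a, w⟫_ℂ = 0 := sub_projCLM_inner B a hwB
    have h2 : ⟪a - projCLM (A ⊓ B) a, w⟫_ℂ = 0 := sub_projCLM_inner (A ⊓ B) a hw
    have : ⟪projCLM B a - projCLM (A ⊓ B) a, w⟫_ℂ
        = ⟪a - projCLM (A ⊓ B) a, w⟫_ℂ - ⟪a - projCLM B a, w⟫_ℂ := by
      simp only [inner_sub_left]
      ring
    rw [this, h1, h2, sub_zero]
  have hclim : Tendsto c atTop (𝓝 ⟪projCLM (A ⊓ B) a, b⟫_ℂ) := by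
    have h1 : Tendsto (fun k => (altS A B)^[k] (projCLM B a)) atTop
        (𝓝 (projCLM (A ⊓ B) (projCLM B a))) := altS_tendsto A B (projCLM B a)
    rw [hz0] at h1
    have h2 : Tendsto (fun k => ⟪(altS A B)^[k] (projCLM B a), b⟫_ℂ) atTop
        (𝓝 ⟪projCLM (A ⊓ B) a, b⟫_ℂ) := h1.inner tendsto_const_nhds
    apply h2.congr
    intro k
    rw [← haseq_iter k, hodd_even k]
  -- compute the tsum
  have htsum : ∑' k, t k = ⟪projCLM (A ⊓ B) a, b⟫_ℂ - ⟪a, b⟫_ℂ := by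
    have h1 : Tendsto (fun N => ∑ k ∈ Finset.range N, t k) atTop (𝓝 (∑' k, t k)) :=
      hsummable.hasSum.tendsto_sum_nat
    have hps : ∀ N, ∑ k ∈ Finset.range N, t k = c N - c 0 := by
      intro N
      have := Finset.sum_range_sub c N
      rw [← this]
      exact Finset.sum_congr rfl (fun k _ => ht_c k)
    have h2 : Tendsto (fun N => ∑ k ∈ Finset.range N, t k) atTop
        (𝓝 (⟪projCLM (A ⊓ B) a, b⟫_ℂ - c 0)) := by
      apply Tendsto.congr (fun N => (hps N).symm)
      exact hclim.sub_const (c 0)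
    have := tendsto_nhds_unique h1 h2
    rw [this]
    congr 1
  -- final assembly
  have hLHS : ⟪(1 - projCLM (A ⊓ B)) a, (1 - projCLM (A ⊓ B)) b⟫_ℂ
      = ⟪a, b⟫_ℂ - ⟪projCLM (A ⊓ B) a, b⟫_ℂ := by
    have e1 : (1 - projCLM (A ⊓ B)) a = a - projCLM (A ⊓ B) a := by
      simp [ContinuousLinearMap.sub_apply]
    have e2 : (1 - projCLM (A ⊓ B)) b = b - projCLM (A ⊓ B) b := by
      simp [ContinuousLinearMap.sub_apply]
    rw [e1, e2, inner_sub_right, sub_projCLM_inner (A ⊓ B) a (projCLM_mem (A ⊓ B) b), sub_zero,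
      inner_sub_left]
  rw [hLHS, htsum]
  ring
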